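/- Let A be an abelian group in which every element has order dividing 2, let Γ be a group acting on A by automorphisms (inducing ring automorphisms r ↦ γ.r of ℤ[1/2][A]), let G ⊆ ℤ[1/2][A] be a finite set of idempotents that are pairwise orthogonal (p·q = 0 for distinct p,q ∈ G), and let Φ ⊆ Γ be a finite subset. Then there exists a finite set K ⊆ ℤ[1/2][A] of pairwise orthogonal idempotents with Σ_{p∈K} p = 1 such that for all p ∈ K, φ ∈ Φ, and q ∈ G, one has either (φ.p)·q = φ.p or (φ.p)·q = 0. -/

import Mathlib

/-- `ℤ[1/2]`: the subring of `ℚ` of rationals whose denominator is a power of `2`. -/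
def Zhalf : Subring ℚ where
  carrier := {q : ℚ | ∃ (m : ℤ) (n : ℕ), q = (m : ℚ) / 2 ^ n}
  zero_mem' := ⟨0, 0, by norm_num⟩
  one_mem' := ⟨1, 0, by norm_num⟩
  add_mem' := by
    rintro a b ⟨m, n, rfl⟩ ⟨m', n', rfl⟩
    exact ⟨m * 2 ^ n' + m' * 2 ^ n, n + n', by push_cast [pow_add]; field_simp⟩
  mul_mem' := by
    rintro a b ⟨m, n, rfl⟩ ⟨m', n', rfl⟩
    exact ⟨m * m', n + n', by push_cast [pow_add]; field_simp⟩
  neg_mem' := by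
    rintro a ⟨m, n, rfl⟩
    exact ⟨-m, n, by push_cast; ring⟩

/-- `o(p)`: the multiplicative order of `2` modulo `p`. -/
noncomputable def oOrd (p : ℕ) : ℕ := orderOf (2 : ZMod p)

/-- `L(p)`: the set of `x` with `2 ≤ x ≤ p+1` congruent mod `p` to a power of `2`. -/
noncomputable def Lset (p : ℕ) : Finset ℕ :=
  letI : DecidablePred fun x : ℕ => ∃ i : ℕ, (2 : ZMod p) ^ i = (x : ZMod p) :=
    fun _ => Classical.propDecidable _
  (Finset.Icc 2 (p + 1)).filter fun x => ∃ i : ℕ, (2 : ZMod p) ^ i = (x : ZMod p)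

/-- `r(p,x)`: the least natural number `r` with `2^r ≡ x (mod p)`. -/
noncomputable def rpx (p x : ℕ) : ℕ := sInf {r : ℕ | (2 : ZMod p) ^ r = (x : ZMod p)}

/-- The value `F(p)` from the paper. -/
noncomputable def Fval (p : ℕ) : ℝ :=
  47 / 64 + (1 / 128) * (1 / (2 ^ oOrd p - 1)) +
    (1 / 64) * (2 ^ p / (2 ^ p - 1)) * ((2 : ℝ) ^ oOrd p / (2 ^ oOrd p - 1)) *
      ∑ x ∈ Lset p, (1 : ℝ) / 2 ^ (x + rpx p x)

/-- The ring automorphism of `ℤ[1/2][A]` induced by the action of `γ ∈ Γ` on `A`. -/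
noncomputable def gact {A Γ : Type*} [CommGroup A] [Group Γ] (φ : Γ →* MulAut A) (γ : Γ)
    (r : MonoidAlgebra Zhalf A) : MonoidAlgebra Zhalf A :=
  MonoidAlgebra.ofCoeff (Finsupp.mapDomain (⇑(φ γ)) r.coeff)


open Finset in
theorem idem_partition {R : Type*} [CommRing R] (S : Finset R) (hS : ∀ e ∈ S, e * e = e) :
    ∃ K : Finset R, (∀ p ∈ K, p * p = p) ∧
      (∀ p ∈ K, ∀ q ∈ K, p ≠ q → p * q = 0) ∧
      (∑ p ∈ K, p) = 1 ∧
      (∀ p ∈ K, ∀ e ∈ S, p * e = p ∨ p * e = 0) := by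
  classical
  set f : Finset R → R := fun T => (∏ e ∈ T, e) * ∏ e ∈ S \ T, (1 - e) with hf
  have key : ∀ U U' : Finset R, U ⊆ S → U' ⊆ S → ∀ e ∈ U, e ∉ U' → f U * f U' = 0 := by
    intro U U' hU hU' e heU heU'
    have heS : e ∈ S \ U' := mem_sdiff.mpr ⟨hU heU, heU'⟩
    rw [hf]; simp only
    rw [← Finset.mul_prod_erase U _ heU, ← Finset.mul_prod_erase (S \ U') _ heS]
    have he : e * e = e := hS e (hU heU)
    set a := ∏ x ∈ U.erase e, x
    set b := ∏ x ∈ S \ U, (1 - x)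
    set c := ∏ x ∈ U', x
    set d := ∏ x ∈ (S \ U').erase e, (1 - x)
    linear_combination (-(a * b * c * d)) * he
  have horth : ∀ T ∈ S.powerset, ∀ T' ∈ S.powerset, T ≠ T' → f T * f T' = 0 := by
    intro T hT T' hT' hne
    rw [mem_powerset] at hT hT'
    by_cases h : T ⊆ T'
    · obtain ⟨e, he1, he2⟩ := not_subset.mp fun h' => hne (Finset.Subset.antisymm h h')
      rw [mul_comm]; exact key T' T hT' hT e he1 he2
    · obtain ⟨e, he1, he2⟩ := not_subset.mp h
      exact key T T' hT hT' e he1 he2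
  have hidem : ∀ T ∈ S.powerset, f T * f T = f T := by
    intro T hT
    rw [mem_powerset] at hT
    rw [hf]; simp only
    rw [mul_mul_mul_comm, ← Finset.prod_mul_distrib, ← Finset.prod_mul_distrib]
    congr 1
    · exact Finset.prod_congr rfl fun e he => hS e (hT he)
    · refine Finset.prod_congr rfl fun e he => ?_
      have := hS e (mem_sdiff.mp he).1
      linear_combination this
  have hsum : ∑ T ∈ S.powerset, f T = 1 := by
    rw [hf]
    rw [← Finset.prod_add]
    simp
  refine ⟨S.powerset.image f, ?_, ?_, ?_, ?_⟩
  · rintro p hp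
    obtain ⟨T, hT, rfl⟩ := Finset.mem_image.mp hp
    exact hidem T hT
  · rintro p hp q hq hne
    obtain ⟨T, hT, rfl⟩ := Finset.mem_image.mp hp
    obtain ⟨T', hT', rfl⟩ := Finset.mem_image.mp hq
    exact horth T hT T' hT' (fun h => hne (by rw [h]))
  · rw [← hsum]
    refine Finset.sum_image' f ?_
    intro T hT
    show f T = _
    rcases eq_or_ne (f T) 0 with h0 | h0
    · rw [h0]
      refine (Finset.sum_eq_zero fun T' hT' => ?_).symm
      exact (Finset.mem_filter.mp hT').2
    · have : Finset.filter (fun T' => f T' = f T) S.powerset = {T} := by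
        apply Finset.Subset.antisymm
        · intro T' hT'
          obtain ⟨hT'm, hfe⟩ := Finset.mem_filter.mp hT'
          rw [Finset.mem_singleton]
          by_contra hne
          have := horth T' hT'm T hT hne
          rw [hfe, hidem T hT] at this
          exact h0 this
        · intro T' hT'
          rw [Finset.mem_singleton] at hT'
          subst hT'
          exact Finset.mem_filter.mpr ⟨hT, rfl⟩
      rw [this, Finset.sum_singleton]
  · rintro p hp e he
    obtain ⟨T, hT, rfl⟩ := Finset.mem_image.mp hp
    rw [mem_powerset] at hT
    by_cases heT : e ∈ T
    · left
      rw [hf]; simp only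
      rw [← Finset.mul_prod_erase T _ heT]
      have hee : e * e = e := hS e he
      set a := ∏ x ∈ T.erase e, x
      set b := ∏ x ∈ S \ T, (1 - x)
      linear_combination a * b * hee
    · right
      have heS : e ∈ S \ T := mem_sdiff.mpr ⟨he, heT⟩
      rw [hf]; simp only
      rw [← Finset.mul_prod_erase (S \ T) _ heS]
      have hee : e * e = e := hS e he
      set a := ∏ x ∈ T, x
      set b := ∏ x ∈ (S \ T).erase e, (1 - x)
      linear_combination (-(a * b)) * hee


theorem gact_mul {A Γ : Type*} [CommGroup A] [Group Γ] (φ : Γ →* MulAut A) (γ : Γ)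
    (a b : MonoidAlgebra Zhalf A) :
    gact φ γ (a * b) = gact φ γ a * gact φ γ b :=
  by unfold gact; exact MonoidAlgebra.mapDomain_mul (φ γ : A →* A) a b

theorem gact_zero {A Γ : Type*} [CommGroup A] [Group Γ] (φ : Γ →* MulAut A) (γ : Γ) :
    gact φ γ (0 : MonoidAlgebra Zhalf A) = 0 :=
  by simp [gact]

theorem gact_gact_inv {A Γ : Type*} [CommGroup A] [Group Γ] (φ : Γ →* MulAut A) (γ : Γ)
    (q : MonoidAlgebra Zhalf A) : gact φ γ (gact φ γ⁻¹ q) = q := by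
  unfold gact; rw [MonoidAlgebra.coeff_ofCoeff, ← Finsupp.mapDomain_comp]
  have h : ⇑(φ γ) ∘ ⇑(φ γ⁻¹) = id := by
    funext a
    simp only [Function.comp_apply, ← MulAut.mul_apply, ← map_mul, mul_inv_cancel, map_one]
    rfl
  rw [h, Finsupp.mapDomain_id, MonoidAlgebra.ofCoeff_coeff]

/-- STATEMENT 15: given a finite set `G` of pairwise orthogonal idempotents of `ℤ[1/2][A]`
and a finite `Φ ⊆ Γ`, there is a finite set `K` of pairwise orthogonal idempotents summing
to `1` such that for all `p ∈ K`, `φ' ∈ Φ`, `q ∈ G`: `(φ'.p)·q = φ'.p` or `(φ'.p)·q = 0`. -/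
theorem statement15 (A : Type) [CommGroup A] (hA : ∀ a : A, a ^ 2 = 1)
    (Γ : Type) [Group Γ] (φ : Γ →* MulAut A)
    (G : Finset (MonoidAlgebra Zhalf A))
    (hidem : ∀ p ∈ G, p * p = p)
    (horth : ∀ p ∈ G, ∀ q ∈ G, p ≠ q → p * q = 0)
    (Φ : Finset Γ) :
    ∃ K : Finset (MonoidAlgebra Zhalf A),
      (∀ p ∈ K, p * p = p) ∧
      (∀ p ∈ K, ∀ q ∈ K, p ≠ q → p * q = 0) ∧
      (∑ p ∈ K, p) = 1 ∧
      ∀ p ∈ K, ∀ γ ∈ Φ, ∀ q ∈ G,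
        gact φ γ p * q = gact φ γ p ∨ gact φ γ p * q = 0 := by
  classical
  set S : Finset (MonoidAlgebra Zhalf A) :=
    (Φ ×ˢ G).image (fun pr => gact φ pr.1⁻¹ pr.2) with hSdef
  have hS : ∀ e ∈ S, e * e = e := by
    rintro e he
    obtain ⟨⟨γ, q⟩, hpr, rfl⟩ := Finset.mem_image.mp he
    obtain ⟨-, hq⟩ := Finset.mem_product.mp hpr
    rw [← gact_mul, hidem q hq]
  obtain ⟨K, h1, h2, h3, h4⟩ := idem_partition S hS
  refine ⟨K, h1, h2, h3, ?_⟩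
  intro p hp γ hγ q hq
  have heS : gact φ γ⁻¹ q ∈ S :=
    Finset.mem_image.mpr ⟨(γ, q), Finset.mem_product.mpr ⟨hγ, hq⟩, rfl⟩
  have hq' : gact φ γ (gact φ γ⁻¹ q) = q := gact_gact_inv φ γ q
  rcases h4 p hp _ heS with h | h
  · left
    rw [← hq', ← gact_mul, h]
  · right
    rw [← hq', ← gact_mul, h, gact_zero]
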